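/- Under instrument unconfoundedness, instrument overlap, monotonicity and instrumentation, the parameter θ₁ = E[Y(1) | D(1) > D(0)] is identified by outcome-regression averaging: with μ₁ = E[Z·D·Y | 𝓖]/π*, μ₀ = E[(1−Z)·D·Y | 𝓖]/(1−π*), ν₁ = E[Z·D | 𝓖]/π*, ν₀ = E[(1−Z)·D | 𝓖]/(1−π*) (the regression functions of D·Y and D given the instrument level and X), one has E[ν₁] − E[ν₀] = P(D(1) > D(0)) > 0 and E[Y(1) | D(1) > D(0)] = ( E[μ₁] − E[μ₀] ) / ( E[ν₁] − E[ν₀] ). -/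

import Mathlib

open MeasureTheory ProbabilityTheory

section Aux

variable {Ω β : Type*} {𝓖 : MeasurableSpace Ω}
  [mΩ : MeasurableSpace Ω] [StandardBorelSpace Ω] [Nonempty Ω]
  {P : Measure Ω} [IsProbabilityMeasure P]
  {h𝓖le : 𝓖 ≤ mΩ}
  [mβ : MeasurableSpace β] {V : Ω → β} {Z W : Ω → ℝ}

lemma aux_int_of_binary (hZ : Measurable Z) (hZbin : ∀ᵐ ω ∂P, Z ω = 0 ∨ Z ω = 1) :
    Integrable Z P := by
  refine Integrable.mono' (integrable_const (1 : ℝ)) hZ.aestronglyMeasurable ?_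
  filter_upwards [hZbin] with ω h
  rcases h with h | h <;> simp [h]

/-- Conditional-independence version of `condexp_indep_eq` for a binary `Z`:
the conditional expectation of `Z` given `𝓖 ⊔ σ(V)` equals the one given `𝓖`. -/
lemma aux_condexp_sup (hV : Measurable V) (hZ : Measurable Z)
    (hZbin : ∀ᵐ ω ∂P, Z ω = 0 ∨ Z ω = 1)
    (hunconf : CondIndepFun 𝓖 h𝓖le V Z P) :
    P[Z | 𝓖 ⊔ MeasurableSpace.comap V mβ] =ᵐ[P] P[Z | 𝓖] := by
  have hm₂le : MeasurableSpace.comap V mβ ≤ mΩ := hV.comap_le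
  have h𝓜le : 𝓖 ⊔ MeasurableSpace.comap V mβ ≤ mΩ := sup_le h𝓖le hm₂le
  have hZint : Integrable Z P := aux_int_of_binary hZ hZbin
  have hB : MeasurableSet (Z ⁻¹' {1}) := hZ (measurableSet_singleton 1)
  have hZeq : Z =ᵐ[P] (Z ⁻¹' {1}).indicator (fun _ => (1:ℝ)) := by
    filter_upwards [hZbin] with ω h
    rcases h with h | h
    · have hnB : ω ∉ Z ⁻¹' {1} := by simp [h]
      simp [Set.indicator_of_notMem hnB, h]
    · have hmB : ω ∈ Z ⁻¹' {1} := by simp [h]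
      simp [Set.indicator_of_mem hmB, h]
  have hfact := (condIndepFun_iff 𝓖 h𝓖le V Z hV hZ P).mp hunconf
  have key : ∀ s : Set Ω, MeasurableSet[𝓖 ⊔ MeasurableSpace.comap V mβ] s →
      ∫ x in s, (P[Z|𝓖]) x ∂P = ∫ x in s, Z x ∂P := by
    have hgen : (𝓖 ⊔ MeasurableSpace.comap V mβ : MeasurableSpace Ω) =
        MeasurableSpace.generateFrom
        {u | ∃ G A, MeasurableSet[𝓖] G ∧ MeasurableSet[MeasurableSpace.comap V mβ] A ∧
          u = G ∩ A} := by
      refine le_antisymm (sup_le ?_ ?_) (MeasurableSpace.generateFrom_le ?_)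
      · intro s hs
        exact MeasurableSpace.measurableSet_generateFrom
          ⟨s, Set.univ, hs, MeasurableSet.univ, (Set.inter_univ s).symm⟩
      · intro s hs
        exact MeasurableSpace.measurableSet_generateFrom
          ⟨Set.univ, s, MeasurableSet.univ, hs, (Set.univ_inter s).symm⟩
      · rintro u ⟨G, A, hG, hA, rfl⟩
        exact MeasurableSet.inter
          ((le_sup_left : 𝓖 ≤ 𝓖 ⊔ MeasurableSpace.comap V mβ) _ hG)
          ((le_sup_right : MeasurableSpace.comap V mβ ≤ 𝓖 ⊔ MeasurableSpace.comap V mβ) _ hA)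
    intro s hs
    refine MeasurableSpace.induction_on_inter (m := 𝓖 ⊔ MeasurableSpace.comap V mβ)
      (C := fun t _ => ∫ x in t, (P[Z|𝓖]) x ∂P = ∫ x in t, Z x ∂P)
      hgen ?_ ?_ ?_ ?_ ?_ _ hs
    · -- IsPiSystem
      rintro u ⟨G1, A1, hG1, hA1, rfl⟩ v ⟨G2, A2, hG2, hA2, rfl⟩ -
      exact ⟨G1 ∩ G2, A1 ∩ A2, hG1.inter hG2, hA1.inter hA2, Set.inter_inter_inter_comm _ _ _ _⟩
    · -- empty set
      simp
    · -- basic sets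
      rintro u ⟨G, A, hG, hA, rfl⟩
      have hGm : MeasurableSet G := h𝓖le _ hG
      have hAm : MeasurableSet A := hm₂le _ hA
      have hABm : MeasurableSet (A ∩ Z ⁻¹' {1}) := hAm.inter hB
      have hBσ : MeasurableSet[MeasurableSpace.comap Z inferInstance] (Z ⁻¹' {1}) :=
        ⟨{1}, measurableSet_singleton 1, rfl⟩
      have hprod := hfact A (Z ⁻¹' {1}) hA hBσ
      have hπB : (P⟦Z ⁻¹' {1} | 𝓖⟧) =ᵐ[P] P[Z|𝓖] := condExp_congr_ae hZeq.symm
      have hint1 : Integrable ((A ∩ Z ⁻¹' {1}).indicator fun _ => (1:ℝ)) P :=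
        (integrable_const (1:ℝ)).indicator hABm
      have hind1 : Integrable ((A.indicator fun _ => (1:ℝ)) * (P[Z|𝓖])) P := by
        refine Integrable.bdd_mul integrable_condExp ?_ (c := 1) (Filter.Eventually.of_forall fun x => ?_)
        · exact ((stronglyMeasurable_one.indicator hAm)).aestronglyMeasurable
        · by_cases hx : x ∈ A <;> simp [hx]
      have hind2 : Integrable ((P[Z|𝓖]) * (A.indicator fun _ => (1:ℝ))) P := by
        have h : (P[Z|𝓖]) * (A.indicator fun _ => (1:ℝ))
            = (A.indicator fun _ => (1:ℝ)) * (P[Z|𝓖]) := mul_comm _ _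
        rw [h]; exact hind1
      have hmul := condExp_mul_of_stronglyMeasurable_left (μ := P) (m := 𝓖)
        stronglyMeasurable_condExp hind2 ((integrable_const (1:ℝ)).indicator hAm)
      calc ∫ x in G ∩ A, (P[Z|𝓖]) x ∂P
          = ∫ x in G, A.indicator (P[Z|𝓖]) x ∂P := (setIntegral_indicator hAm).symm
        _ = ∫ x in G, ((P[Z|𝓖]) * (A.indicator fun _ => (1:ℝ))) x ∂P := by
            refine setIntegral_congr_fun hGm (fun x _ => ?_)
            by_cases hx : x ∈ A <;> simp [hx]
        _ = ∫ x in G, (P[(P[Z|𝓖]) * (A.indicator fun _ => (1:ℝ)) | 𝓖]) x ∂P :=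
            (setIntegral_condExp h𝓖le hind2 hG).symm
        _ = ∫ x in G, ((P[Z|𝓖]) x * (P⟦A | 𝓖⟧) x) ∂P := by
            refine integral_congr_ae (ae_restrict_of_ae ?_)
            filter_upwards [hmul] with x hx
            simpa using hx
        _ = ∫ x in G, (P⟦A ∩ Z ⁻¹' {1} | 𝓖⟧) x ∂P := by
            refine integral_congr_ae (ae_restrict_of_ae ?_)
            filter_upwards [hprod, hπB] with x h1 h2
            simp only [Pi.mul_apply] at h1
            rw [h1, h2, mul_comm]
        _ = ∫ x in G, (A ∩ Z ⁻¹' {1}).indicator (fun _ => (1:ℝ)) x ∂P :=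
            setIntegral_condExp h𝓖le hint1 hG
        _ = ∫ x in G ∩ (A ∩ Z ⁻¹' {1}), (1:ℝ) ∂P := setIntegral_indicator hABm
        _ = ∫ x in (G ∩ A) ∩ Z ⁻¹' {1}, (1:ℝ) ∂P := by rw [Set.inter_assoc]
        _ = ∫ x in G ∩ A, (Z ⁻¹' {1}).indicator (fun _ => (1:ℝ)) x ∂P :=
            (setIntegral_indicator hB).symm
        _ = ∫ x in G ∩ A, Z x ∂P := by
            refine integral_congr_ae (ae_restrict_of_ae ?_)
            filter_upwards [hZeq] with x hx using hx.symm
    · -- complements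
      intro t htm hC
      have h1 := integral_add_compl (h𝓜le t htm) (integrable_condExp (f := Z) (m := 𝓖) (μ := P))
      have h2 := integral_add_compl (h𝓜le t htm) hZint
      have h3 : ∫ x, (P[Z|𝓖]) x ∂P = ∫ x, Z x ∂P := integral_condExp h𝓖le
      linarith
    · -- countable disjoint unions
      intro f hdisj hfm hC
      rw [integral_iUnion (fun i => h𝓜le _ (hfm i)) hdisj integrable_condExp.integrableOn,
        integral_iUnion (fun i => h𝓜le _ (hfm i)) hdisj hZint.integrableOn]
      exact tsum_congr hC
  exact (ae_eq_condExp_of_forall_setIntegral_eq h𝓜le hZint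
    (fun s _ _ => integrable_condExp.integrableOn) (fun s hs _ => key s hs)
    ((stronglyMeasurable_condExp.mono
      (le_sup_left : 𝓖 ≤ 𝓖 ⊔ MeasurableSpace.comap V mβ)).aestronglyMeasurable)).symm

/-- Pull-out of the propensity: `E[Z·W | 𝓖] = E[Z|𝓖] · E[W|𝓖]` for `W` a `σ(V)`-measurable
integrable function, under conditional independence of `V` and binary `Z` given `𝓖`. -/
lemma aux_condexp_mul (hV : Measurable V) (hZ : Measurable Z)
    (hZbin : ∀ᵐ ω ∂P, Z ω = 0 ∨ Z ω = 1)
    (hunconf : CondIndepFun 𝓖 h𝓖le V Z P)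
    (hW : Measurable[MeasurableSpace.comap V mβ] W)
    (hWint : Integrable W P)
    (hZWint : Integrable (fun ω => Z ω * W ω) P) :
    P[fun ω => Z ω * W ω | 𝓖] =ᵐ[P] fun ω => (P[Z | 𝓖]) ω * (P[W | 𝓖]) ω := by
  have hm₂le : MeasurableSpace.comap V mβ ≤ mΩ := hV.comap_le
  have h𝓜le : 𝓖 ⊔ MeasurableSpace.comap V mβ ≤ mΩ := sup_le h𝓖le hm₂le
  have hZint : Integrable Z P := aux_int_of_binary hZ hZbin
  have hπ01 : ∀ᵐ ω ∂P, 0 ≤ (P[Z|𝓖]) ω ∧ (P[Z|𝓖]) ω ≤ 1 := by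
    have h1 : 0 ≤ᵐ[P] P[Z|𝓖] := condExp_nonneg (by
      filter_upwards [hZbin] with ω h; rcases h with h | h <;> simp [h])
    have h2 : P[Z|𝓖] ≤ᵐ[P] P[(fun _ => (1:ℝ))|𝓖] := condExp_mono hZint (integrable_const 1) (by
      filter_upwards [hZbin] with ω h; rcases h with h | h <;> simp [h])
    rw [condExp_const h𝓖le (1:ℝ)] at h2
    filter_upwards [h1, h2] with ω a b
    exact ⟨a, b⟩
  have hWsm : StronglyMeasurable[𝓖 ⊔ MeasurableSpace.comap V mβ] W :=
    (hW.mono (le_sup_right : MeasurableSpace.comap V mβ ≤ 𝓖 ⊔ MeasurableSpace.comap V mβ)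
      le_rfl).stronglyMeasurable
  have step1 : P[Z | 𝓖 ⊔ MeasurableSpace.comap V mβ] =ᵐ[P] P[Z | 𝓖] :=
    aux_condexp_sup hV hZ hZbin hunconf
  have hWZint : Integrable (W * Z) P := by
    have h : W * Z = fun ω => Z ω * W ω := by funext ω; simp [mul_comm]
    rw [h]; exact hZWint
  have step2 : P[fun ω => Z ω * W ω | 𝓖 ⊔ MeasurableSpace.comap V mβ]
      =ᵐ[P] fun ω => W ω * (P[Z|𝓖]) ω := by
    have h1 : (fun ω => Z ω * W ω) = W * Z := by funext ω; simp [mul_comm]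
    rw [h1]
    refine (condExp_mul_of_stronglyMeasurable_left hWsm hWZint hZint).trans ?_
    filter_upwards [step1] with ω hω
    simp only [Pi.mul_apply]
    rw [hω]
  have step3 : P[fun ω => Z ω * W ω | 𝓖] =ᵐ[P] P[fun ω => W ω * (P[Z|𝓖]) ω | 𝓖] :=
    ((condExp_condExp_of_le
      (le_sup_left : 𝓖 ≤ 𝓖 ⊔ MeasurableSpace.comap V mβ) h𝓜le).symm).trans
      (condExp_congr_ae step2)
  have hπW : Integrable ((P[Z|𝓖]) * W) P := by
    refine Integrable.mono' hWint.abs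
      (((stronglyMeasurable_condExp.mono h𝓖le).aestronglyMeasurable).mul
        hWint.aestronglyMeasurable) ?_
    filter_upwards [hπ01] with ω h
    simp only [Pi.mul_apply, norm_mul]
    calc ‖(P[Z|𝓖]) ω‖ * ‖W ω‖ ≤ 1 * ‖W ω‖ := by
          refine mul_le_mul_of_nonneg_right ?_ (norm_nonneg _)
          rw [Real.norm_eq_abs, abs_le]; exact ⟨by linarith [h.1], h.2⟩
      _ = |W ω| := by rw [one_mul, Real.norm_eq_abs]
  have step4 := condExp_mul_of_stronglyMeasurable_left (μ := P) (m := 𝓖)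
    stronglyMeasurable_condExp hπW hWint
  refine step3.trans ?_
  have hcomm : (fun ω => W ω * (P[Z|𝓖]) ω) = (P[Z|𝓖]) * W := by
    funext ω; simp [mul_comm]
  rw [hcomm]
  refine step4.trans ?_
  filter_upwards [] with ω
  simp

lemma aux_integral_indicator_one {Ω : Type*} [mΩ : MeasurableSpace Ω]
    (P : Measure Ω) [IsFiniteMeasure P] {s : Set Ω} (hs : MeasurableSet s) :
    ∫ x, s.indicator (fun _ => (1:ℝ)) x ∂P = (P s).toReal := by
  rw [integral_indicator hs]
  simp
  rfl

lemma aux_integral_indicator {Ω : Type*} [mΩ : MeasurableSpace Ω]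
    (P : Measure Ω) {f : Ω → ℝ} {s : Set Ω} (hs : MeasurableSet s) :
    ∫ x, s.indicator f x ∂P = ∫ x in s, f x ∂P := integral_indicator hs

end Aux
theorem stmt_3
    {Ω : Type*} [mΩ : MeasurableSpace Ω] [StandardBorelSpace Ω] [Nonempty Ω]
    {𝒳 : Type*} [MeasurableSpace 𝒳] [StandardBorelSpace 𝒳]
    (P : Measure Ω) [IsProbabilityMeasure P]
    (Z D1 D0 Y1 Y0 : Ω → ℝ) (X : Ω → 𝒳)
    (hZmeas : Measurable Z) (hD1meas : Measurable D1) (hD0meas : Measurable D0)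
    (hY1meas : Measurable Y1) (hY0meas : Measurable Y0) (hXmeas : Measurable X)
    (hZbin : ∀ᵐ ω ∂P, Z ω = 0 ∨ Z ω = 1)
    (hD1bin : ∀ᵐ ω ∂P, D1 ω = 0 ∨ D1 ω = 1)
    (hD0bin : ∀ᵐ ω ∂P, D0 ω = 0 ∨ D0 ω = 1)
    (𝓖 : MeasurableSpace Ω) (h𝓖 : 𝓖 = MeasurableSpace.comap X inferInstance)
    (h𝓖le : 𝓖 ≤ mΩ)
    (πs : Ω → ℝ) (hπs : πs = P[Z | 𝓖])
    (hunconf : CondIndepFun 𝓖 h𝓖le (fun ω => (Y1 ω, Y0 ω, D1 ω, D0 ω)) Z P)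
    (hoverlap : ∀ᵐ ω ∂P, 0 < πs ω ∧ πs ω < 1)
    (hmono : ∀ᵐ ω ∂P, D0 ω ≤ D1 ω)
    (hinstr : P {ω | D1 ω = 1} ≠ P {ω | D0 ω = 1})
    (D Y : Ω → ℝ)
    (hD : D = fun ω => Z ω * D1 ω + (1 - Z ω) * D0 ω)
    (hY : Y = fun ω => D ω * Y1 ω + (1 - D ω) * Y0 ω)
    (μ1 μ0 ν1 ν0 : Ω → ℝ)
    (hμ1 : μ1 = fun ω => (P[fun ω' => Z ω' * D ω' * Y ω' | 𝓖]) ω / πs ω)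
    (hμ0 : μ0 = fun ω => (P[fun ω' => (1 - Z ω') * D ω' * Y ω' | 𝓖]) ω / (1 - πs ω))
    (hν1 : ν1 = fun ω => (P[fun ω' => Z ω' * D ω' | 𝓖]) ω / πs ω)
    (hν0 : ν0 = fun ω => (P[fun ω' => (1 - Z ω') * D ω' | 𝓖]) ω / (1 - πs ω))
    (hμ1int : Integrable μ1 P) (hμ0int : Integrable μ0 P)
    (hν1int : Integrable ν1 P) (hν0int : Integrable ν0 P)
    (hZDYint : Integrable (fun ω => Z ω * D ω * Y ω) P)
    (hZDYint' : Integrable (fun ω => (1 - Z ω) * D ω * Y ω) P)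
    (hZDint : Integrable (fun ω => Z ω * D ω) P)
    (hZDint' : Integrable (fun ω => (1 - Z ω) * D ω) P)
    (hY1int : Integrable Y1 P) :
    ((∫ ω, ν1 ω ∂P) - (∫ ω, ν0 ω ∂P) = (P {ω | D0 ω < D1 ω}).toReal) ∧
    0 < (P {ω | D0 ω < D1 ω}).toReal ∧
    (∫ ω in {ω | D0 ω < D1 ω}, Y1 ω ∂P) / (P {ω | D0 ω < D1 ω}).toReal =
      ((∫ ω, μ1 ω ∂P) - (∫ ω, μ0 ω ∂P)) / ((∫ ω, ν1 ω ∂P) - (∫ ω, ν0 ω ∂P)) := by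
  -- the vector of potential variables
  have hV := hY1meas.prodMk (hY0meas.prodMk (hD1meas.prodMk hD0meas))
  have hVm2 : Measurable[MeasurableSpace.comap
      (fun ω => (Y1 ω, Y0 ω, D1 ω, D0 ω)) inferInstance]
      (fun ω => (Y1 ω, Y0 ω, D1 ω, D0 ω)) := measurable_iff_comap_le.mpr le_rfl
  -- measurability of the relevant functions w.r.t. σ(V)
  have hW1m : Measurable[MeasurableSpace.comap
      (fun ω => (Y1 ω, Y0 ω, D1 ω, D0 ω)) inferInstance] (fun ω => D1 ω * Y1 ω) :=
    (measurable_snd.snd.fst.mul measurable_fst).comp hVm2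
  have hW0m : Measurable[MeasurableSpace.comap
      (fun ω => (Y1 ω, Y0 ω, D1 ω, D0 ω)) inferInstance] (fun ω => D0 ω * Y1 ω) :=
    (measurable_snd.snd.snd.mul measurable_fst).comp hVm2
  have hD1m : Measurable[MeasurableSpace.comap
      (fun ω => (Y1 ω, Y0 ω, D1 ω, D0 ω)) inferInstance] D1 :=
    measurable_snd.snd.fst.comp hVm2
  have hD0m : Measurable[MeasurableSpace.comap
      (fun ω => (Y1 ω, Y0 ω, D1 ω, D0 ω)) inferInstance] D0 :=
    measurable_snd.snd.snd.comp hVm2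
  -- the complementary instrument
  have hZ'meas : Measurable[mΩ] (fun ω => 1 - Z ω) := measurable_const.sub hZmeas
  have hZ'bin : ∀ᵐ ω ∂P, 1 - Z ω = 0 ∨ 1 - Z ω = 1 := by
    filter_upwards [hZbin] with ω h
    rcases h with h | h <;> simp [h]
  have hunconf' : CondIndepFun 𝓖 h𝓖le (fun ω => (Y1 ω, Y0 ω, D1 ω, D0 ω))
      (fun ω => 1 - Z ω) P :=
    hunconf.comp measurable_id (measurable_const.sub measurable_id)
  -- integrability of the substituted products
  have hW1int : Integrable (fun ω => D1 ω * Y1 ω) P := by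
    refine Integrable.mono' hY1int.abs
      ((hD1meas.mul hY1meas).aestronglyMeasurable) ?_
    filter_upwards [hD1bin] with ω h
    rcases h with h | h <;> simp [h, abs_nonneg]
  have hW0int : Integrable (fun ω => D0 ω * Y1 ω) P := by
    refine Integrable.mono' hY1int.abs
      ((hD0meas.mul hY1meas).aestronglyMeasurable) ?_
    filter_upwards [hD0bin] with ω h
    rcases h with h | h <;> simp [h, abs_nonneg]
  have hD1int : Integrable D1 P := aux_int_of_binary (mΩ := mΩ) hD1meas hD1bin
  have hD0int : Integrable D0 P := aux_int_of_binary (mΩ := mΩ) hD0meas hD0bin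
  -- algebraic a.e. identities
  have hZDY : (fun ω => Z ω * D ω * Y ω) =ᵐ[P] fun ω => Z ω * (D1 ω * Y1 ω) := by
    filter_upwards [hZbin, hD1bin, hD0bin] with ω hz h1 h0
    simp only [hD, hY]
    rcases hz with hz | hz <;> rcases h1 with h1 | h1 <;> rcases h0 with h0 | h0 <;>
      simp [hz, h1, h0] <;> ring
  have hZDY' : (fun ω => (1 - Z ω) * D ω * Y ω) =ᵐ[P] fun ω => (1 - Z ω) * (D0 ω * Y1 ω) := by
    filter_upwards [hZbin, hD1bin, hD0bin] with ω hz h1 h0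
    simp only [hD, hY]
    rcases hz with hz | hz <;> rcases h1 with h1 | h1 <;> rcases h0 with h0 | h0 <;>
      simp [hz, h1, h0] <;> ring
  have hZD : (fun ω => Z ω * D ω) =ᵐ[P] fun ω => Z ω * D1 ω := by
    filter_upwards [hZbin] with ω hz
    simp only [hD]
    rcases hz with hz | hz <;> simp [hz]
  have hZD' : (fun ω => (1 - Z ω) * D ω) =ᵐ[P] fun ω => (1 - Z ω) * D0 ω := by
    filter_upwards [hZbin] with ω hz
    simp only [hD]
    rcases hz with hz | hz <;> simp [hz]
  -- apply the pull-out lemma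
  have F1 := aux_condexp_mul (mΩ := mΩ) (h𝓖le := h𝓖le) hV hZmeas hZbin hunconf hW1m hW1int
    (hZDYint.congr hZDY)
  have F0 := aux_condexp_mul (mΩ := mΩ) (h𝓖le := h𝓖le) hV hZ'meas hZ'bin hunconf' hW0m hW0int
    (hZDYint'.congr hZDY')
  have G1 := aux_condexp_mul (mΩ := mΩ) (h𝓖le := h𝓖le) hV hZmeas hZbin hunconf hD1m hD1int
    (hZDint.congr hZD)
  have G0 := aux_condexp_mul (mΩ := mΩ) (h𝓖le := h𝓖le) hV hZ'meas hZ'bin hunconf' hD0m hD0int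
    (hZDint'.congr hZD')
  -- conditional expectation of the complementary instrument
  have hZint : Integrable Z P := aux_int_of_binary (mΩ := mΩ) hZmeas hZbin
  have hπ' : P[(fun ω => 1 - Z ω) | 𝓖] =ᵐ[P] fun ω => 1 - πs ω := by
    have h1 : (fun ω => 1 - Z ω) = (fun _ : Ω => (1:ℝ)) - Z := rfl
    rw [h1]
    refine (condExp_sub (integrable_const 1) hZint 𝓖).trans ?_
    rw [condExp_const h𝓖le (1:ℝ)]
    filter_upwards [] with ω
    simp [hπs]
  -- identification of the regression averages
  have hμ1ae : μ1 =ᵐ[P] P[fun ω => D1 ω * Y1 ω | 𝓖] := by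
    rw [hμ1]
    filter_upwards [condExp_congr_ae (μ := P) (m := 𝓖) hZDY, F1, hoverlap] with ω h1 h2 h3
    rw [h1, h2, ← hπs, mul_div_cancel_left₀ _ (ne_of_gt h3.1)]
  have hμ0ae : μ0 =ᵐ[P] P[fun ω => D0 ω * Y1 ω | 𝓖] := by
    rw [hμ0]
    filter_upwards [condExp_congr_ae (μ := P) (m := 𝓖) hZDY', F0, hπ', hoverlap]
      with ω h1 h2 h3 h4
    rw [h1, h2, h3, mul_div_cancel_left₀ _ (by linarith [h4.2] : (1:ℝ) - πs ω ≠ 0)]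
  have hν1ae : ν1 =ᵐ[P] P[D1 | 𝓖] := by
    rw [hν1]
    filter_upwards [condExp_congr_ae (μ := P) (m := 𝓖) hZD, G1, hoverlap] with ω h1 h2 h3
    rw [h1, h2, ← hπs, mul_div_cancel_left₀ _ (ne_of_gt h3.1)]
  have hν0ae : ν0 =ᵐ[P] P[D0 | 𝓖] := by
    rw [hν0]
    filter_upwards [condExp_congr_ae (μ := P) (m := 𝓖) hZD', G0, hπ', hoverlap]
      with ω h1 h2 h3 h4
    rw [h1, h2, h3, mul_div_cancel_left₀ _ (by linarith [h4.2] : (1:ℝ) - πs ω ≠ 0)]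
  -- integrals
  have Iμ1 : ∫ ω, μ1 ω ∂P = ∫ ω, D1 ω * Y1 ω ∂P :=
    (integral_congr_ae hμ1ae).trans (integral_condExp h𝓖le)
  have Iμ0 : ∫ ω, μ0 ω ∂P = ∫ ω, D0 ω * Y1 ω ∂P :=
    (integral_congr_ae hμ0ae).trans (integral_condExp h𝓖le)
  have Iν1 : ∫ ω, ν1 ω ∂P = ∫ ω, D1 ω ∂P :=
    (integral_congr_ae hν1ae).trans (integral_condExp h𝓖le)
  have Iν0 : ∫ ω, ν0 ω ∂P = ∫ ω, D0 ω ∂P :=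
    (integral_congr_ae hν0ae).trans (integral_condExp h𝓖le)
  -- the complier set
  have hS : MeasurableSet[mΩ] {ω | D0 ω < D1 ω} := measurableSet_lt hD0meas hD1meas
  have hindS : (fun ω => D1 ω - D0 ω) =ᵐ[P]
      ({ω | D0 ω < D1 ω}).indicator (fun _ => (1:ℝ)) := by
    filter_upwards [hD1bin, hD0bin, hmono] with ω h1 h0 hm
    by_cases hω : D0 ω < D1 ω
    · have hmem : ω ∈ {ω' | D0 ω' < D1 ω'} := hω
      rw [Set.indicator_of_mem hmem]
      rcases h1 with h1 | h1 <;> rcases h0 with h0 | h0 <;>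
        linarith
    · have hmem : ω ∉ {ω' | D0 ω' < D1 ω'} := hω
      rw [Set.indicator_of_notMem hmem]
      have : D1 ω ≤ D0 ω := not_lt.mp hω
      linarith
  have hindSY : (fun ω => (D1 ω - D0 ω) * Y1 ω) =ᵐ[P]
      ({ω | D0 ω < D1 ω}).indicator Y1 := by
    filter_upwards [hindS] with ω h
    rw [h]
    by_cases hω : ω ∈ {ω | D0 ω < D1 ω}
    · rw [Set.indicator_of_mem hω, Set.indicator_of_mem hω, one_mul]
    · rw [Set.indicator_of_notMem hω, Set.indicator_of_notMem hω, zero_mul]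
  have hJ : (∫ ω, ν1 ω ∂P) - (∫ ω, ν0 ω ∂P) = (P {ω | D0 ω < D1 ω}).toReal := by
    rw [Iν1, Iν0, ← integral_sub hD1int hD0int]
    rw [integral_congr_ae hindS]
    exact aux_integral_indicator_one (mΩ := mΩ) P hS
  have hI : (∫ ω, μ1 ω ∂P) - (∫ ω, μ0 ω ∂P) = ∫ ω in {ω | D0 ω < D1 ω}, Y1 ω ∂P := by
    rw [Iμ1, Iμ0, ← integral_sub hW1int hW0int]
    have h : (fun ω => D1 ω * Y1 ω - D0 ω * Y1 ω) = fun ω => (D1 ω - D0 ω) * Y1 ω := by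
      funext ω; ring
    rw [h, integral_congr_ae hindSY, aux_integral_indicator (mΩ := mΩ) P hS]
  -- positivity
  have hED1 : ∫ ω, D1 ω ∂P = (P {ω | D1 ω = 1}).toReal := by
    have h : D1 =ᵐ[P] ({ω | D1 ω = 1}).indicator (fun _ => (1:ℝ)) := by
      filter_upwards [hD1bin] with ω h
      rcases h with h | h
      · rw [Set.indicator_of_notMem (by simp [h] : ω ∉ {ω | D1 ω = 1}), h]
      · rw [Set.indicator_of_mem (by simp [h] : ω ∈ {ω | D1 ω = 1}), h]
    have hSm : MeasurableSet[mΩ] {ω | D1 ω = 1} := hD1meas (measurableSet_singleton 1)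
    rw [integral_congr_ae h]
    exact aux_integral_indicator_one (mΩ := mΩ) P hSm
  have hED0 : ∫ ω, D0 ω ∂P = (P {ω | D0 ω = 1}).toReal := by
    have h : D0 =ᵐ[P] ({ω | D0 ω = 1}).indicator (fun _ => (1:ℝ)) := by
      filter_upwards [hD0bin] with ω h
      rcases h with h | h
      · rw [Set.indicator_of_notMem (by simp [h] : ω ∉ {ω | D0 ω = 1}), h]
      · rw [Set.indicator_of_mem (by simp [h] : ω ∈ {ω | D0 ω = 1}), h]
    have hSm : MeasurableSet[mΩ] {ω | D0 ω = 1} := hD0meas (measurableSet_singleton 1)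
    rw [integral_congr_ae h]
    exact aux_integral_indicator_one (mΩ := mΩ) P hSm
  have hne : (P {ω | D0 ω < D1 ω}).toReal ≠ 0 := by
    intro h0
    apply hinstr
    have h1 : (P {ω | D1 ω = 1}).toReal = (P {ω | D0 ω = 1}).toReal := by
      have := hJ
      rw [Iν1, Iν0, hED1, hED0, h0] at this
      linarith
    exact (ENNReal.toReal_eq_toReal_iff' (measure_ne_top P _) (measure_ne_top P _)).mp h1
  have hpos : 0 < (P {ω | D0 ω < D1 ω}).toReal :=
    lt_of_le_of_ne ENNReal.toReal_nonneg (Ne.symm hne)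
  refine ⟨hJ, hpos, ?_⟩
  rw [hI, hJ]
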